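/- arXiv:1304.2012 — 4 statements merged into one kernel-verified Lean document; each statement's English description precedes it below -/
import Mathlib

section
/- Along any smooth evolution φ of a closed hypersurface satisfying the Euler–Lagrange equation ∂_t v = ΔH + H|A|² - H³/2 + v²H/2, the energy E(φ_t) = ∫_M (v² - H²) dμ̄_t is constant in time. -/
open MeasureTheory Set

private lemma abs_mul_le' {a b A B : ℝ} (ha : |a| ≤ A) (hb : |b| ≤ B) : |a * b| ≤ A * B := by
  rw [abs_mul]
  exact mul_le_mul ha hb (abs_nonneg _) ((abs_nonneg a).trans ha)

/-- Energy conservation along smooth solutions of the Euler--Lagrange equation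
`∂ₜv = ΔH + H|A|² - H³/2 + v²H/2`. The evolving surface measure is encoded by a
density `m` with respect to a reference measure `μref` on the abstract closed
manifold `M`, satisfying `∂ₜ m = -vH m`; the Laplace-Beltrami terms `Lv = Δv`,
`LH = ΔH` satisfy the integration by parts identity, and `∂ₜH = Δv + v|A|²`. -/
theorem stmt_9 (M : Type*) [MeasurableSpace M] (μref : Measure M) [IsFiniteMeasure μref]
    (T : ℝ) (hT : 0 < T)
    (v H A2 Lv LH m dv dH dm : M → ℝ → ℝ)
    (hmpos : ∀ x t, 0 < m x t)
    (hdm : ∀ x t, HasDerivAt (m x) (dm x t) t)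
    (hdv : ∀ x t, HasDerivAt (v x) (dv x t) t)
    (hdH : ∀ x t, HasDerivAt (H x) (dH x t) t)
    (heqm : ∀ x t, dm x t = -(v x t) * H x t * m x t)
    (heqv : ∀ x t, dv x t
      = LH x t + H x t * A2 x t - (H x t)^3 / 2 + (v x t)^2 * H x t / 2)
    (heqH : ∀ x t, dH x t = Lv x t + v x t * A2 x t)
    (hIBP : ∀ t, ∫ x, (v x t * LH x t - H x t * Lv x t) * m x t ∂μref = 0)
    (hbdd : ∃ C : ℝ, ∀ x t, |v x t| ≤ C ∧ |H x t| ≤ C ∧ |A2 x t| ≤ C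
      ∧ |Lv x t| ≤ C ∧ |LH x t| ≤ C ∧ |m x t| ≤ C)
    (hint : ∀ t, Integrable (fun x => ((v x t)^2 - (H x t)^2) * m x t) μref)
    (hint' : ∀ t, Integrable (fun x =>
      (2 * v x t * dv x t - 2 * H x t * dH x t) * m x t
        + ((v x t)^2 - (H x t)^2) * dm x t) μref) :
    ∀ t₁ ∈ Icc 0 T, ∀ t₂ ∈ Icc 0 T,
      ∫ x, ((v x t₁)^2 - (H x t₁)^2) * m x t₁ ∂μref
        = ∫ x, ((v x t₂)^2 - (H x t₂)^2) * m x t₂ ∂μref := by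
  obtain ⟨C, hC⟩ := hbdd
  set F : ℝ → M → ℝ := fun t x => ((v x t)^2 - (H x t)^2) * m x t with hFdef
  set F' : ℝ → M → ℝ := fun t x =>
    (2 * v x t * dv x t - 2 * H x t * dH x t) * m x t
      + ((v x t)^2 - (H x t)^2) * dm x t with hF'def
  set Dv : ℝ := C + C^2 + C^3 + C^3 with hDv
  set DH : ℝ := C + C^2 with hDH
  set B : ℝ := (2*C*Dv + 2*C*DH)*C + (C^2 + C^2)*C^3 with hBdef
  -- pointwise derivative
  have hderiv : ∀ x t, HasDerivAt (fun s => F s x) (F' t x) t := by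
    intro x t
    have h1 : HasDerivAt (fun s => (v x s)^2 - (H x s)^2)
        (2 * v x t * dv x t - 2 * H x t * dH x t) t := by
      have h := ((hdv x t).fun_pow 2).fun_sub ((hdH x t).fun_pow 2)
      refine h.congr_deriv ?_
      ring
    exact h1.mul (hdm x t)
  -- uniform bound on the derivative
  have hbound : ∀ x t, |F' t x| ≤ B := by
    intro x t
    obtain ⟨h1, h2, h3, h4, h5, h6⟩ := hC x t
    have hC0 : (0:ℝ) ≤ C := (abs_nonneg _).trans h1
    have hH3 : |(H x t)^3| ≤ C^3 := by
      rw [abs_pow]; exact pow_le_pow_left₀ (abs_nonneg _) h2 3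
    have hv2H : |(v x t)^2 * H x t| ≤ C^3 := by
      have : |(v x t)^2| ≤ C^2 := by
        rw [abs_pow]; exact pow_le_pow_left₀ (abs_nonneg _) h1 2
      calc |(v x t)^2 * H x t| ≤ C^2 * C := abs_mul_le' this h2
        _ = C^3 := by ring
    have hdvb : |dv x t| ≤ Dv := by
      rw [heqv]
      calc |LH x t + H x t * A2 x t - (H x t)^3 / 2 + (v x t)^2 * H x t / 2|
          ≤ |LH x t + H x t * A2 x t - (H x t)^3 / 2| + |(v x t)^2 * H x t / 2| :=
            abs_add_le _ _
        _ ≤ (|LH x t + H x t * A2 x t| + |(H x t)^3 / 2|) + |(v x t)^2 * H x t / 2| := by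
            gcongr; exact abs_sub _ _
        _ ≤ ((|LH x t| + |H x t * A2 x t|) + |(H x t)^3 / 2|) + |(v x t)^2 * H x t / 2| := by
            gcongr; exact abs_add_le _ _
        _ ≤ ((C + C^2) + C^3) + C^3 := by
            have e1 : |H x t * A2 x t| ≤ C^2 := by
              calc |H x t * A2 x t| ≤ C * C := abs_mul_le' h2 h3
                _ = C^2 := by ring
            have e2 : |(H x t)^3 / 2| ≤ C^3 := by
              have : |(H x t)^3 / 2| = |(H x t)^3| / 2 := by rw [abs_div, abs_two]
              rw [this]
              exact (div_le_self (abs_nonneg _) one_le_two).trans hH3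
            have e3 : |(v x t)^2 * H x t / 2| ≤ C^3 := by
              have : |(v x t)^2 * H x t / 2| = |(v x t)^2 * H x t| / 2 := by
                rw [abs_div, abs_two]
              rw [this]
              exact (div_le_self (abs_nonneg _) one_le_two).trans hv2H
            gcongr
        _ = Dv := by rw [hDv]
    have hdHb : |dH x t| ≤ DH := by
      rw [heqH]
      calc |Lv x t + v x t * A2 x t| ≤ |Lv x t| + |v x t * A2 x t| := abs_add_le _ _
        _ ≤ C + C * C := add_le_add h4 (abs_mul_le' h1 h3)
        _ = DH := by rw [hDH]; ring
    have hdmb : |dm x t| ≤ C^3 := by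
      rw [heqm]
      calc |-(v x t) * H x t * m x t| ≤ C * C * C := by
            apply abs_mul_le' _ h6
            apply abs_mul_le' _ h2
            rw [abs_neg]; exact h1
        _ = C^3 := by ring
    have hA : |(2 * v x t * dv x t - 2 * H x t * dH x t) * m x t| ≤ (2*C*Dv + 2*C*DH)*C := by
      apply abs_mul_le' _ h6
      calc |2 * v x t * dv x t - 2 * H x t * dH x t|
          ≤ |2 * v x t * dv x t| + |2 * H x t * dH x t| := abs_sub _ _
        _ ≤ 2*C*Dv + 2*C*DH := by
            gcongr
            · apply abs_mul_le' _ hdvb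
              calc |2 * v x t| = 2 * |v x t| := by rw [abs_mul]; simp
                _ ≤ 2 * C := by linarith
            · apply abs_mul_le' _ hdHb
              calc |2 * H x t| = 2 * |H x t| := by rw [abs_mul]; simp
                _ ≤ 2 * C := by linarith
    have hB2 : |((v x t)^2 - (H x t)^2) * dm x t| ≤ (C^2 + C^2)*C^3 := by
      apply abs_mul_le' _ hdmb
      calc |(v x t)^2 - (H x t)^2| ≤ |(v x t)^2| + |(H x t)^2| := abs_sub _ _
        _ ≤ C^2 + C^2 := by
            gcongr
            · rw [abs_pow]; exact pow_le_pow_left₀ (abs_nonneg _) h1 2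
            · rw [abs_pow]; exact pow_le_pow_left₀ (abs_nonneg _) h2 2
    calc |F' t x| ≤ |(2 * v x t * dv x t - 2 * H x t * dH x t) * m x t|
          + |((v x t)^2 - (H x t)^2) * dm x t| := abs_add_le _ _
      _ ≤ (2*C*Dv + 2*C*DH)*C + (C^2 + C^2)*C^3 := add_le_add hA hB2
      _ = B := rfl
  -- derivative of the energy is zero
  have key : ∀ t₀ : ℝ, HasDerivAt (fun t => ∫ x, F t x ∂μref) 0 t₀ := by
    intro t₀
    have main := hasDerivAt_integral_of_dominated_loc_of_deriv_le
      (F := F) (F' := F') (x₀ := t₀) (bound := fun _ => B) (μ := μref) (s := univ) Filter.univ_mem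
      (Filter.Eventually.of_forall fun t => (hint t).aestronglyMeasurable)
      (hint t₀) (hint' t₀).aestronglyMeasurable
      (Filter.Eventually.of_forall fun x => fun t _ => by
        simpa using hbound x t)
      (integrable_const B)
      (Filter.Eventually.of_forall fun x => fun t _ => hderiv x t)
    have hval : ∫ x, F' t₀ x ∂μref = 0 := by
      have hpt : ∀ x, F' t₀ x
          = 2 * ((v x t₀ * LH x t₀ - H x t₀ * Lv x t₀) * m x t₀) := by
        intro x
        simp only [hF'def, heqv, heqH, heqm]
        ring
      calc ∫ x, F' t₀ x ∂μref
          = ∫ x, 2 * ((v x t₀ * LH x t₀ - H x t₀ * Lv x t₀) * m x t₀) ∂μref := by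
            exact integral_congr_ae (Filter.Eventually.of_forall hpt)
        _ = 2 * ∫ x, (v x t₀ * LH x t₀ - H x t₀ * Lv x t₀) * m x t₀ ∂μref :=
            integral_const_mul 2 _
        _ = 0 := by rw [hIBP]; ring
    have := main.2
    rwa [hval] at this
  -- conclude constancy
  intro t₁ _ t₂ _
  exact is_const_of_deriv_eq_zero (fun t => (key t).differentiableAt)
    (fun t => (key t).deriv) t₁ t₂
end

section
/- Let R₀ > R_T > 0 and T > 0 with T ≥ (R₀² - R_T²)/4. For any c ∈ ℝ with c² ≤ 1, and any smooth evolution of closed surfaces in ℝ³ connecting spheres of areas 4πR₀² and 4πR_T², one has ∫₀^T∫_M (v² + H²) dμ̄_t dt ≥ 8πc(R₀² - R_T²) + 16π(1-c²)T, using 2∫₀^T∫ vH dμ̄ dt = 8π(R₀² - R_T²), the pointwise inequality v² + H² ≥ 2c·vH + (1-c²)H² (valid since (v - cH)² ≥ 0), and the Willmore bound ∫_M H² dμ̄_t ≥ 16π. -/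
open MeasureTheory Set Real

/-- Lower bound for the action of any smooth evolution of closed surfaces in ℝ³
connecting concentric round spheres of radii `R₀ > R_T`, given the area identity
`2∫∫ vH dμ̄ dt = 8π(R₀² - R_T²)` and the Willmore bound `∫ H² dμ̄ₜ ≥ 16π`. The
evolving surface measure is encoded as a density `m ≥ 0` against a reference
measure `μref` on the abstract surface `M`. -/
theorem stmt_15 (M : Type*) [MeasurableSpace M] (μref : Measure M)
    (T R₀ RT c : ℝ) (hRT : 0 < RT) (hR : RT < R₀) (hT0 : 0 < T)
    (hT : (R₀^2 - RT^2)/4 ≤ T) (hc : c^2 ≤ 1)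
    (v H m : M → ℝ → ℝ) (hm : ∀ x t, 0 ≤ m x t)
    (hi1 : ∀ t, Integrable (fun x => ((v x t)^2 + (H x t)^2) * m x t) μref)
    (hi2 : ∀ t, Integrable (fun x => v x t * H x t * m x t) μref)
    (hi3 : ∀ t, Integrable (fun x => (H x t)^2 * m x t) μref)
    (hj1 : IntegrableOn (fun t => ∫ x, ((v x t)^2 + (H x t)^2) * m x t ∂μref) (Ioo 0 T))
    (hj2 : IntegrableOn (fun t => ∫ x, v x t * H x t * m x t ∂μref) (Ioo 0 T))
    (hj3 : IntegrableOn (fun t => ∫ x, (H x t)^2 * m x t ∂μref) (Ioo 0 T))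
    (harea : 2 * ∫ t in Ioo 0 T, ∫ x, v x t * H x t * m x t ∂μref
      = 8*π*(R₀^2 - RT^2))
    (hWillmore : ∀ t ∈ Ioo 0 T, 16*π ≤ ∫ x, (H x t)^2 * m x t ∂μref) :
    8*π*c*(R₀^2 - RT^2) + 16*π*(1 - c^2)*T
      ≤ ∫ t in Ioo 0 T, ∫ x, ((v x t)^2 + (H x t)^2) * m x t ∂μref := by
  have hc1 : (0:ℝ) ≤ 1 - c ^ 2 := by linarith
  -- inner pointwise bound
  have hinner : ∀ t, 2 * c * (∫ x, v x t * H x t * m x t ∂μref)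
      + (1 - c ^ 2) * (∫ x, (H x t)^2 * m x t ∂μref)
      ≤ ∫ x, ((v x t)^2 + (H x t)^2) * m x t ∂μref := by
    intro t
    have h1 : Integrable (fun x => 2 * c * (v x t * H x t * m x t)
        + (1 - c ^ 2) * ((H x t)^2 * m x t)) μref :=
      ((hi2 t).const_mul _).add ((hi3 t).const_mul _)
    calc 2 * c * (∫ x, v x t * H x t * m x t ∂μref)
          + (1 - c ^ 2) * (∫ x, (H x t)^2 * m x t ∂μref)
        = ∫ x, (2 * c * (v x t * H x t * m x t)
            + (1 - c ^ 2) * ((H x t)^2 * m x t)) ∂μref := by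
          rw [integral_add ((hi2 t).const_mul _) ((hi3 t).const_mul _),
            integral_const_mul, integral_const_mul]
      _ ≤ ∫ x, ((v x t)^2 + (H x t)^2) * m x t ∂μref := by
          apply integral_mono h1 (hi1 t)
          intro x
          have key : (v x t - c * H x t)^2 * m x t ≥ 0 :=
            mul_nonneg (sq_nonneg _) (hm x t)
          simp only
          nlinarith [key]
  -- outer
  have houter : (∫ t in Ioo 0 T, (2 * c * (∫ x, v x t * H x t * m x t ∂μref)
      + (1 - c ^ 2) * (∫ x, (H x t)^2 * m x t ∂μref)))
      ≤ ∫ t in Ioo 0 T, ∫ x, ((v x t)^2 + (H x t)^2) * m x t ∂μref := by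
    apply setIntegral_mono ((hj2.const_mul _).add (hj3.const_mul _)) hj1
    intro t
    exact hinner t
  have hsplit : (∫ t in Ioo 0 T, (2 * c * (∫ x, v x t * H x t * m x t ∂μref)
      + (1 - c ^ 2) * (∫ x, (H x t)^2 * m x t ∂μref)))
      = 2 * c * (∫ t in Ioo 0 T, ∫ x, v x t * H x t * m x t ∂μref)
        + (1 - c ^ 2) * (∫ t in Ioo 0 T, ∫ x, (H x t)^2 * m x t ∂μref) := by
    rw [integral_add (hj2.const_mul _) (hj3.const_mul _),
      integral_const_mul, integral_const_mul]
  have hW : 16 * π * T ≤ ∫ t in Ioo 0 T, ∫ x, (H x t)^2 * m x t ∂μref := by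
    have : (∫ t in Ioo 0 T, (16*π : ℝ)) ≤ ∫ t in Ioo 0 T, ∫ x, (H x t)^2 * m x t ∂μref := by
      apply setIntegral_mono_on (integrableOn_const measure_Ioo_lt_top.ne) hj3
        measurableSet_Ioo
      intro t ht; exact hWillmore t ht
    rwa [setIntegral_const, measureReal_def, Real.volume_Ioo, sub_zero,
      ENNReal.toReal_ofReal hT0.le, smul_eq_mul, mul_comm] at this
  have h2 : 2 * c * (∫ t in Ioo 0 T, ∫ x, v x t * H x t * m x t ∂μref)
      = 8*π*c*(R₀^2 - RT^2) := by
    linear_combination c * harea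
  have h3 : 16*π*(1 - c^2)*T ≤ (1 - c ^ 2) * (∫ t in Ioo 0 T, ∫ x, (H x t)^2 * m x t ∂μref) := by
    nlinarith [mul_le_mul_of_nonneg_left hW hc1]
  linarith [houter, hsplit ▸ houter]
end

section
/- For every integer l ≥ 0 and every T ≥ (√3/3)·T_MCF with T_MCF > 0, the quantity 4(2 - l(l+1))·T_MCF²/T² + 2((l(l+1) - 1)² - 1) is nonnegative. Conversely, for each fixed l ≥ 2 there exists T > 0 small enough so that this quantity is negative. -/
theorem stmt_18 (Tmcf : ℝ) (hTm : 0 < Tmcf) :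
    (∀ l : ℕ, ∀ T : ℝ, Real.sqrt 3 / 3 * Tmcf ≤ T →
      0 ≤ 4 * (2 - (l*(l+1) : ℝ)) * Tmcf^2 / T^2
            + 2 * (((l*(l+1) : ℝ) - 1)^2 - 1))
    ∧ (∀ l : ℕ, 2 ≤ l → ∃ T : ℝ, 0 < T ∧
        4 * (2 - (l*(l+1) : ℝ)) * Tmcf^2 / T^2
          + 2 * (((l*(l+1) : ℝ) - 1)^2 - 1) < 0) := by
  constructor
  · intro l T hT
    have h3 : (0:ℝ) < Real.sqrt 3 := Real.sqrt_pos.mpr (by norm_num)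
    have hT0 : 0 < T := lt_of_lt_of_le (by positivity) hT
    have hsq : Real.sqrt 3 ^ 2 = 3 := Real.sq_sqrt (by norm_num)
    have hle : Tmcf ^ 2 ≤ 3 * T ^ 2 := by
      nlinarith [mul_le_mul hT hT (by positivity : (0:ℝ) ≤ Real.sqrt 3 / 3 * Tmcf) hT0.le]
    have hpos : (0:ℝ) < T ^ 2 := by positivity
    have key : 0 ≤ 4 * (2 - (l*(l+1) : ℝ)) * Tmcf^2
        + 2 * (((l*(l+1) : ℝ) - 1)^2 - 1) * T^2 := by
      match l with
      | 0 => push_cast; nlinarith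
      | 1 => push_cast; nlinarith
      | (n+2) =>
        have hn : (0:ℝ) ≤ (n:ℝ) := Nat.cast_nonneg n
        push_cast
        nlinarith [mul_nonneg (mul_nonneg hn hn) (sub_nonneg.mpr hle),
          mul_nonneg hn (sub_nonneg.mpr hle), sub_nonneg.mpr hle,
          mul_nonneg (mul_nonneg (mul_nonneg hn hn) (mul_nonneg hn hn)) hpos.le,
          mul_nonneg (mul_nonneg (mul_nonneg hn hn) hn) hpos.le,
          mul_nonneg (mul_nonneg hn hn) hpos.le, mul_nonneg hn hpos.le]
    calc (0:ℝ) ≤ (4 * (2 - (l*(l+1) : ℝ)) * Tmcf^2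
        + 2 * (((l*(l+1) : ℝ) - 1)^2 - 1) * T^2) / T^2 := div_nonneg key hpos.le
      _ = 4 * (2 - (l*(l+1) : ℝ)) * Tmcf^2 / T^2
            + 2 * (((l*(l+1) : ℝ) - 1)^2 - 1) := by field_simp
  · intro l hl
    refine ⟨Tmcf / ((l:ℝ)+1), by positivity, ?_⟩
    have hn : (2:ℝ) ≤ (l:ℝ) := by exact_mod_cast hl
    have h1 : 4 * (2 - (l*(l+1) : ℝ)) * Tmcf^2 / (Tmcf / ((l:ℝ)+1))^2
        = 4 * (2 - (l*(l+1) : ℝ)) * ((l:ℝ)+1)^2 := by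
      have hne : ((l:ℝ)+1) ≠ 0 := by positivity
      field_simp
    rw [h1]
    nlinarith [sq_nonneg ((l:ℝ)+1), sq_nonneg ((l:ℝ)-2)]
end

section
/- Let R₀, R_T > 0 and T > max{R₀²/4, R_T²/4}. If T > (R₀ + R_T)²/4 then 8π(R₀² + R_T²) < 16π(T_MCF²/T + T) where T_MCF = |R₀² - R_T²|/4; i.e. the action of the trajectory with vanishing and point nucleation is strictly smaller than the action of the optimal smooth spherical connection. If T < (R₀+R_T)²/4 the opposite strict inequality holds. -/
open Real

theorem stmt_19 (R₀ RT T : ℝ) (hR₀ : 0 < R₀) (hRT : 0 < RT)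
    (hT : max (R₀^2/4) (RT^2/4) < T) :
    ((R₀ + RT)^2/4 < T →
      8*π*(R₀^2 + RT^2) < 16*π*((|R₀^2 - RT^2|/4)^2 / T + T))
    ∧ (T < (R₀ + RT)^2/4 →
      16*π*((|R₀^2 - RT^2|/4)^2 / T + T) < 8*π*(R₀^2 + RT^2)) := by
  have h1 : R₀^2/4 < T := lt_of_le_of_lt (le_max_left _ _) hT
  have h2 : RT^2/4 < T := lt_of_le_of_lt (le_max_right _ _) hT
  have hT0 : 0 < T := lt_trans (by positivity) h1
  have habs : (|R₀^2 - RT^2|/4)^2 = (R₀^2 - RT^2)^2/16 := by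
    rw [div_pow, sq_abs]; norm_num
  have hπ := pi_pos
  have hminus : (R₀ - RT)^2/4 < T := by
    rcases le_total R₀ RT with hle | hle
    · nlinarith [mul_nonneg hR₀.le (sub_nonneg.2 hle), mul_pos hR₀ hRT]
    · nlinarith [mul_nonneg hRT.le (sub_nonneg.2 hle), mul_pos hR₀ hRT]
  have heq : (R₀^2 - RT^2)^2/16 / T + T = ((R₀^2 - RT^2)^2/16 + T*T)/T := by
    field_simp
  constructor
  · intro h
    rw [habs]
    have main : (R₀^2 + RT^2)/2 < (R₀^2 - RT^2)^2/16 / T + T := by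
      rw [heq, lt_div_iff₀ hT0]
      nlinarith [mul_pos (sub_pos.2 h) (sub_pos.2 hminus)]
    nlinarith [mul_pos hπ (sub_pos.2 main)]
  · intro h
    rw [habs]
    have main : (R₀^2 - RT^2)^2/16 / T + T < (R₀^2 + RT^2)/2 := by
      rw [heq, div_lt_iff₀ hT0]
      nlinarith [mul_pos (sub_pos.2 h) (sub_pos.2 hminus)]
    nlinarith [mul_pos hπ (sub_pos.2 main)]
end
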